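/- Let f : A → B be a ring epimorphism and P⁻¹ →g P⁰ a two-term complex of finitely generated projective left A-modules quasi-isomorphic to K_f = (A →f B). If B ⊗[A] g is an isomorphism (for instance if f is homological), then Tor_1^A(A_{g}, coker(f)) = 0, where A_{g} is the universal localisation of A at g. -/

import Mathlib

universe u

open CategoryTheory CategoryTheory.Limits
open scoped TensorProduct

/-- A ring homomorphism is an epimorphism in the category of rings. -/
def IsRingEpi {A B : Type*} [Ring A] [Ring B] (f : A →+* B) : Prop :=
  ∀ (C : Type*) [Ring C] (g₁ g₂ : B →+* C), g₁.comp f = g₂.comp f → g₁ = g₂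

/-- A ring homomorphism `h : A → C` *inverts* a map `g` of `A`-modules if `C ⊗[A] g`
(where `C` is an `A`-module via `h`) is an isomorphism. -/
def InvertsMap {A : Type u} [CommRing A] {P Q : Type u} [AddCommGroup P] [AddCommGroup Q]
    [Module A P] [Module A Q] (g : P →ₗ[A] Q) (C : Type u) [Ring C] (h : A →+* C) : Prop := by
  letI : Module A C := Module.compHom C h
  exact Function.Bijective (LinearMap.lTensor C g)

/-- A morphism of two-term complexes `(P⁻¹ →g P⁰) ⟶ (M →f N)`, given by components
`π₂` (degree `-1`) and `π₁` (degree `0`), is a quasi-isomorphism: it commutes with the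
differentials and induces isomorphisms on `H⁻¹` (kernels) and `H⁰` (cokernels). -/
def IsTwoTermQuasiIso {A P Q M N : Type*} [Ring A]
    [AddCommGroup P] [AddCommGroup Q] [AddCommGroup M] [AddCommGroup N]
    [Module A P] [Module A Q] [Module A M] [Module A N]
    (g : P →ₗ[A] Q) (f : M →ₗ[A] N) (π₂ : P →ₗ[A] M) (π₁ : Q →ₗ[A] N) : Prop :=
  f.comp π₂ = π₁.comp g ∧
  Submodule.map π₂ (LinearMap.ker g) = LinearMap.ker f ∧
  (∀ x ∈ LinearMap.ker g, π₂ x = 0 → x = 0) ∧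
  (∀ n : N, ∃ q : Q, n - π₁ q ∈ LinearMap.range f) ∧
  (∀ q : Q, π₁ q ∈ LinearMap.range f → q ∈ LinearMap.range g)

section Aux
variable {A : Type u} [CommRing A]
  {Pm1 P0 : Type u} [AddCommGroup Pm1] [AddCommGroup P0] [Module A Pm1] [Module A P0]
  [Module.Projective A Pm1] [Module.Projective A P0]

noncomputable def auxComplex (g : Pm1 →ₗ[A] P0) : ChainComplex (ModuleCat.{u} A) ℕ :=
  ChainComplex.mk' (ModuleCat.of A P0) (ModuleCat.of A Pm1) (ModuleCat.ofHom g)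
    (fun f => ⟨Projective.syzygies f, Projective.d f,
      (Category.assoc _ _ _).trans ((congrArg _ (kernel.condition f)).trans Limits.comp_zero)⟩)

omit [Module.Projective A Pm1] [Module.Projective A P0] in
lemma auxComplex_d_1_0 (g : Pm1 →ₗ[A] P0) :
    (auxComplex g).d 1 0 = ModuleCat.ofHom g :=
  ChainComplex.mk'_d_1_0 _ _ _ _

instance (g : Pm1 →ₗ[A] P0) (n : ℕ) : Projective ((auxComplex g).X n) := by
  have h0 : Projective (ModuleCat.of A P0) := (IsProjective.iff_projective _).mp ‹_›
  have h1 : Projective (ModuleCat.of A Pm1) := (IsProjective.iff_projective _).mp ‹_›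
  obtain (_ | _ | _ | n) := n
  · exact h0
  · exact h1
  · apply Projective.projective_over
  · apply Projective.projective_over

omit [Module.Projective A Pm1] [Module.Projective A P0] in
lemma auxComplex_exactAt_succ (g : Pm1 →ₗ[A] P0) (n : ℕ) :
    (auxComplex g).ExactAt (n + 1) := by
  rw [HomologicalComplex.exactAt_iff' _ (n + 1 + 1) (n + 1) n (by simp) (by simp)]
  refine (ShortComplex.exact_iff_of_iso ?_).2 (CategoryTheory.exact_d_f ((auxComplex g).d (n + 1) n))
  refine ShortComplex.isoMk (ChainComplex.mk'XIso (ModuleCat.of A P0) (ModuleCat.of A Pm1)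
    (ModuleCat.ofHom g) (fun f => ⟨Projective.syzygies f, Projective.d f,
      (Category.assoc _ _ _).trans ((congrArg _ (kernel.condition f)).trans Limits.comp_zero)⟩) n)
    (Iso.refl _) (Iso.refl _) ?_ ?_
  · exact (ChainComplex.mk'_d _ _ _ _ n).symm.trans (Category.comp_id _).symm
  · exact (Category.id_comp _).trans (Category.comp_id _).symm

variable {B : Type u} [CommRing B] [Algebra A B]

noncomputable def auxRes (g : Pm1 →ₗ[A] P0) (π₁ : P0 →ₗ[A] B)
    (hsurj : ∀ n : B, ∃ q, n - π₁ q ∈ LinearMap.range (Algebra.linearMap A B))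
    (hker : ∀ q : P0, π₁ q ∈ LinearMap.range (Algebra.linearMap A B) → q ∈ LinearMap.range g)
    (hc : ∀ p, π₁ (g p) ∈ LinearMap.range (Algebra.linearMap A B)) :
    ProjectiveResolution
      (ModuleCat.of A (B ⧸ LinearMap.range (Algebra.linearMap A B))) where
  complex := auxComplex g
  π := (ChainComplex.toSingle₀Equiv _ _).symm
    ⟨ModuleCat.ofHom ((LinearMap.range (Algebra.linearMap A B)).mkQ ∘ₗ π₁), by
      rw [auxComplex_d_1_0]
      ext p
      exact (Submodule.Quotient.mk_eq_zero _).2 (hc p)⟩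
  quasiIso := ⟨fun n => by
    cases n with
    | zero =>
      rw [ChainComplex.quasiIsoAt₀_iff, ShortComplex.quasiIso_iff_of_zeros']
      · have w : ModuleCat.ofHom g ≫
            ModuleCat.ofHom ((LinearMap.range (Algebra.linearMap A B)).mkQ ∘ₗ π₁) = 0 := by
          ext p
          exact (Submodule.Quotient.mk_eq_zero _).2 (hc p)
        have hex : (ShortComplex.mk _ _ w).Exact := by
          rw [ShortComplex.moduleCat_exact_iff]
          intro x hx
          exact hker x ((Submodule.Quotient.mk_eq_zero _).1 hx)
        have hepi : Epi (ShortComplex.mk _ _ w).g := by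
          rw [ModuleCat.epi_iff_surjective]
          intro b
          obtain ⟨b', rfl⟩ := Submodule.Quotient.mk_surjective _ b
          obtain ⟨q, hq⟩ := hsurj b'
          exact ⟨q, ((Submodule.Quotient.eq _).2 hq).symm⟩
        refine (ShortComplex.exact_and_epi_g_iff_of_iso ?_).2 ⟨hex, hepi⟩
        exact ShortComplex.isoMk (Iso.refl _) (Iso.refl _) (Iso.refl _)
            (by simp [auxComplex_d_1_0]; rfl) (by simp; rfl)
      all_goals rfl
    | succ n =>
      rw [quasiIsoAt_iff_exactAt']
      · apply auxComplex_exactAt_succ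
      · apply ChainComplex.exactAt_succ_single_obj⟩

end Aux

set_option maxHeartbeats 1000000 in
/-- Let `f : A → B` be a ring epimorphism and `g : P⁻¹ → P⁰` a two-term
complex of finitely generated projective left `A`-modules quasi-isomorphic to
`K_f = (A →f B)`.  Assume `B ⊗[A] g` is an isomorphism (which holds, for instance, if `f` is
homological).  Let `L` (with the map `algebraMap A L`) be the universal localisation
`A_{g}` of `A` at `g`; i.e. `algebraMap A L` inverts `g` and is initial among ring
homomorphisms inverting `g`.  Then `Tor₁^A(A_{g}, coker f) = 0` where `coker f = B/f(A)`. -/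
theorem Tor_one_universalLocalisation_coker_eq_zero {A B : Type u} [CommRing A] [CommRing B]
    [Algebra A B]
    {Pm1 P0 : Type u} [AddCommGroup Pm1] [AddCommGroup P0] [Module A Pm1] [Module A P0]
    [Module.Finite A Pm1] [Module.Finite A P0]
    [Module.Projective A Pm1] [Module.Projective A P0]
    (g : Pm1 →ₗ[A] P0) (π₂ : Pm1 →ₗ[A] A) (π₁ : P0 →ₗ[A] B)
    (hepi : IsRingEpi (algebraMap A B))
    (hqis : IsTwoTermQuasiIso g (Algebra.linearMap A B) π₂ π₁)
    (hinv : Function.Bijective (LinearMap.lTensor B g))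
    (L : Type u) [CommRing L] [Algebra A L]
    (hL : InvertsMap g L (algebraMap A L))
    (hLuniv : ∀ (C : Type u) [Ring C] (h : A →+* C), InvertsMap g C h →
      ∃! k : L →+* C, k.comp (algebraMap A L) = h) :
    IsZero (((Tor (ModuleCat.{u} A) 1).obj (ModuleCat.of A L)).obj
      (ModuleCat.of A (B ⧸ LinearMap.range (Algebra.linearMap A B)))) := by
  have hMod : (Module.compHom L (algebraMap A L)) = (inferInstance : Module A L) :=
    Module.ext' _ _ (fun r m => (Algebra.smul_def r m).symm)
  unfold InvertsMap at hL
  rw [hMod] at hL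
  obtain ⟨hcomm, -, -, hsurj, hker⟩ := hqis
  have hc : ∀ p, π₁ (g p) ∈ LinearMap.range (Algebra.linearMap A B) := by
    intro p
    exact ⟨π₂ p, LinearMap.congr_fun hcomm p⟩
  let R := auxRes g π₁ hsurj hker hc
  refine IsZero.of_iso ?_
    (R.isoLeftDerivedObj
      ((CategoryTheory.MonoidalCategory.tensoringLeft (ModuleCat.{u} A)).obj (ModuleCat.of A L)) 1)
  rw [HomologicalComplex.homologyFunctor_obj,
    ← HomologicalComplex.exactAt_iff_isZero_homology]
  rw [HomologicalComplex.exactAt_iff' _ 2 1 0 (by simp) (by simp)]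
  rw [ShortComplex.moduleCat_exact_iff]
  intro x hx
  refine ⟨0, ?_⟩
  rw [map_zero]
  have hd : ((CategoryTheory.MonoidalCategory.tensoringLeft (ModuleCat.{u} A)).obj
      (ModuleCat.of A L)).map
      ((auxComplex g).d 1 0) = ModuleCat.ofHom (LinearMap.lTensor L g) := by
    rw [auxComplex_d_1_0]
    rfl
  have hlt : LinearMap.lTensor L g x = 0 := by
    rw [← hd] at *
    exact hx
  have hx0 : x = 0 := by
    have := hL.1 (a₁ := x) (a₂ := 0) (by simpa using hlt)
    exact this
  rw [hx0]
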